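/- Assume ℛ₀ > 1 and let (S*, I*) be an endemic equilibrium. If (S, I) is a traveling wave profile with speed c such that I(ξ) > 0 and 0 < S(ξ) ≤ S₀ for all ξ ∈ ℝ, (S(ξ), I(ξ)) → (S₀, 0) as ξ → −∞, and (S(ξ), I(ξ)) → (S*, I*) as ξ → +∞, then c > 0. -/

import Mathlib

open Real Filter MeasureTheory Set

/-- **Positivity of the wave speed** (Lemma 4.1).
Assume `ℛ₀ > 1` and let `(S*, I*)` be an endemic equilibrium.  If `(S, I)` is a
traveling wave profile with speed `c` such that `I(ξ) > 0`, `0 < S(ξ) ≤ S₀` for all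
`ξ`, `(S, I) → (S₀, 0)` at `-∞` and `(S, I) → (S*, I*)` at `+∞`, then `c > 0`. -/
theorem wave_speed_pos
    (d₁ d₂ Λ β μ₁ μ₂ : ℝ) (hd₁ : 0 < d₁) (hd₂ : 0 < d₂) (hΛ : 0 < Λ)
    (hβ : 0 < β) (hμ₁ : 0 < μ₁) (hμ₂ : 0 < μ₂)
    (f : ℝ → ℝ) (hf0 : f 0 = 0) (hfC1 : ContDiff ℝ 1 f)
    (hf' : ∀ I : ℝ, 0 ≤ I → 0 < deriv f I)
    (hfratio : ∀ I J : ℝ, 0 < I → I ≤ J → f J / J ≤ f I / I)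
    (hR₀ : 1 < β * (Λ / μ₁) * deriv f 0 / μ₂)
    (Sstar Istar : ℝ) (hSstar : 0 < Sstar) (hIstar : 0 < Istar)
    (heq1 : Λ - β * Sstar * f Istar - μ₁ * Sstar = 0)
    (heq2 : β * Sstar * f Istar - μ₂ * Istar = 0)
    (c : ℝ) (S I : ℝ → ℝ) (hS : ContDiff ℝ 1 S) (hI : ContDiff ℝ 1 I)
    (hSeq : ∀ ξ : ℝ, c * deriv S ξ =
      d₁ * (S (ξ + 1) + S (ξ - 1) - 2 * S ξ) + Λ - μ₁ * S ξ - β * S ξ * f (I ξ))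
    (hIeq : ∀ ξ : ℝ, c * deriv I ξ =
      d₂ * (I (ξ + 1) + I (ξ - 1) - 2 * I ξ) + β * S ξ * f (I ξ) - μ₂ * I ξ)
    (hpos : ∀ ξ : ℝ, 0 < I ξ ∧ 0 < S ξ ∧ S ξ ≤ Λ / μ₁)
    (hbot : Tendsto (fun ξ : ℝ => (S ξ, I ξ)) atBot (nhds (Λ / μ₁, 0)))
    (htop : Tendsto (fun ξ : ℝ => (S ξ, I ξ)) atTop (nhds (Sstar, Istar))) :
    0 < c := by
  by_contra hc0
  push_neg at hc0
  -- continuity facts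
  have hIc : Continuous I := hI.continuous
  have hSc : Continuous S := hS.continuous
  have hfc : Continuous f := hfC1.continuous
  set g : ℝ → ℝ := fun ξ => β * S ξ * f (I ξ) - μ₂ * I ξ with hgdef
  have hgc : Continuous g := by
    apply Continuous.sub
    · exact (continuous_const.mul hSc).mul (hfc.comp hIc)
    · exact continuous_const.mul hIc
  have hInt : ∀ p q : ℝ, IntervalIntegrable I volume p q := fun p q =>
    hIc.intervalIntegrable p q
  -- limits at -∞
  have hSbot : Tendsto S atBot (nhds (Λ / μ₁)) := by
    exact (continuous_fst.tendsto ((Λ / μ₁ : ℝ), (0 : ℝ))).comp hbot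
  have hIbot : Tendsto I atBot (nhds (0 : ℝ)) := by
    exact (continuous_snd.tendsto ((Λ / μ₁ : ℝ), (0 : ℝ))).comp hbot
  -- slope of f at 0
  have hdf : HasDerivAt f (deriv f 0) 0 := ((hfC1.differentiable one_ne_zero) 0).hasDerivAt
  have hslope0 : Tendsto (fun x => f x / x) (nhdsWithin (0 : ℝ) {x | x ≠ 0})
      (nhds (deriv f 0)) := by
    have h := hasDerivAt_iff_tendsto_slope.mp hdf
    have he : (fun x => f x / x) = slope f 0 := by
      funext x
      simp [slope_def_field, hf0]
    rw [he]
    exact h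
  have hIbot' : Tendsto I atBot (nhdsWithin (0 : ℝ) {x | x ≠ 0}) :=
    tendsto_nhdsWithin_iff.mpr ⟨hIbot, Eventually.of_forall fun ξ => (hpos ξ).1.ne'⟩
  have hratio : Tendsto (fun ξ => β * S ξ * (f (I ξ) / I ξ)) atBot
      (nhds (β * (Λ / μ₁) * deriv f 0)) :=
    ((tendsto_const_nhds.mul hSbot).mul (hslope0.comp hIbot'))
  have hμ₂lt : μ₂ < β * (Λ / μ₁) * deriv f 0 := by
    rw [lt_div_iff₀ hμ₂] at hR₀; linarith
  set μ : ℝ := (β * (Λ / μ₁) * deriv f 0 - μ₂) / 2 with hμdef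
  have hμpos : 0 < μ := by rw [hμdef]; linarith
  have hev : ∀ᶠ ξ in atBot, μ₂ + μ < β * S ξ * (f (I ξ) / I ξ) :=
    hratio.eventually (eventually_gt_nhds (by rw [hμdef]; linarith))
  obtain ⟨M, hM⟩ := eventually_atBot.mp hev
  -- lower bound on reaction term to the left of M
  have hgI : ∀ ξ : ℝ, ξ ≤ M → μ * I ξ ≤ g ξ := by
    intro ξ hξ
    have h1 := hM ξ hξ
    have hIξ : 0 < I ξ := (hpos ξ).1
    have he : β * S ξ * f (I ξ) = β * S ξ * (f (I ξ) / I ξ) * I ξ := by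
      field_simp
    have h2 : (μ₂ + μ) * I ξ ≤ β * S ξ * (f (I ξ) / I ξ) * I ξ :=
      mul_le_mul_of_nonneg_right h1.le hIξ.le
    rw [← he] at h2
    simp only [hgdef]
    linarith
  -- notation
  set D : ℝ → ℝ := fun x => ∫ s in x..(x + 1), I s with hDdef
  have hDpos : ∀ x : ℝ, 0 < D x := fun x =>
    intervalIntegral.intervalIntegral_pos_of_pos (hInt x (x + 1)) (fun s => (hpos s).1) (by linarith)
  have hintnonneg : ∀ p q : ℝ, p ≤ q → 0 ≤ ∫ x in p..q, I x := fun p q h =>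
    intervalIntegral.integral_nonneg h fun u _ => (hpos u).1.le
  -- key integral identity
  have key : ∀ a b : ℝ, c * I b - c * I a =
      d₂ * D b - d₂ * (∫ x in a..(a + 1), I x) + d₂ * (∫ x in (a - 1)..a, I x)
        - d₂ * D (b - 1) + ∫ x in a..b, g x := by
    intro a b
    have h1 : (∫ x in a..b, deriv I x) = I b - I a :=
      intervalIntegral.integral_deriv_eq_sub
        (fun x _ => (hI.differentiable one_ne_zero) x)
        ((hI.continuous_deriv le_rfl).intervalIntegrable a b)
    have h2 : (∫ x in a..b, c * deriv I x) = c * (I b - I a) := by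
      rw [intervalIntegral.integral_const_mul, h1]
    have e1 : IntervalIntegrable (fun x => I (x + 1)) volume a b :=
      (hIc.comp (continuous_id.add continuous_const)).intervalIntegrable a b
    have e2 : IntervalIntegrable (fun x => I (x - 1)) volume a b :=
      (hIc.comp (continuous_id.sub continuous_const)).intervalIntegrable a b
    have eg : IntervalIntegrable g volume a b := hgc.intervalIntegrable a b
    have h3 : (∫ x in a..b, c * deriv I x) =
        d₂ * (∫ x in a..b, I (x + 1)) + d₂ * (∫ x in a..b, I (x - 1))
          - 2 * d₂ * (∫ x in a..b, I x) + ∫ x in a..b, g x := by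
      have hcongr : (∫ x in a..b, c * deriv I x) =
          ∫ x in a..b, (d₂ * I (x + 1) + d₂ * I (x - 1) - 2 * d₂ * I x + g x) := by
        apply intervalIntegral.integral_congr
        intro x _
        have := hIeq x
        simp only [hgdef]
        linarith [hIeq x]
      rw [hcongr]
      rw [intervalIntegral.integral_add (((e1.const_mul d₂).add (e2.const_mul d₂)).sub
        ((hInt a b).const_mul (2 * d₂))) eg]
      rw [intervalIntegral.integral_sub ((e1.const_mul d₂).add (e2.const_mul d₂))
        ((hInt a b).const_mul (2 * d₂))]
      rw [intervalIntegral.integral_add (e1.const_mul d₂) (e2.const_mul d₂)]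
      rw [intervalIntegral.integral_const_mul, intervalIntegral.integral_const_mul,
        intervalIntegral.integral_const_mul]
    have h5 : (∫ x in a..b, I (x + 1)) =
        (∫ x in a..b, I x) + D b - ∫ x in a..(a + 1), I x := by
      rw [intervalIntegral.integral_comp_add_right]
      have c1 := intervalIntegral.integral_add_adjacent_intervals
        (hInt (a + 1) b) (hInt b (b + 1))
      have c2 := intervalIntegral.integral_add_adjacent_intervals
        (hInt a (a + 1)) (hInt (a + 1) b)
      simp only [hDdef]
      linarith
    have h6 : (∫ x in a..b, I (x - 1)) =
        (∫ x in a..b, I x) + (∫ x in (a - 1)..a, I x) - D (b - 1) := by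
      rw [intervalIntegral.integral_comp_sub_right]
      have c1 := intervalIntegral.integral_add_adjacent_intervals
        (hInt (a - 1) (b - 1)) (hInt (b - 1) b)
      have c2 := intervalIntegral.integral_add_adjacent_intervals
        (hInt (a - 1) a) (hInt a b)
      have hb1 : (b - 1) + 1 = b := by ring
      simp only [hDdef, hb1]
      linarith
    have h7 := h3
    rw [h5, h6, h2] at h7
    linarith
  -- main inequality before the limit
  have hB : ∀ a b : ℝ, a ≤ b → b ≤ M →
      d₂ * D b + μ * ∫ x in a..b, I x ≤
        d₂ * D (b - 1) + d₂ * (∫ x in a..(a + 1), I x) + (-c) * I a := by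
    intro a b hab hbM
    have hgb : μ * ∫ x in a..b, I x ≤ ∫ x in a..b, g x := by
      rw [← intervalIntegral.integral_const_mul]
      apply intervalIntegral.integral_mono_on hab
        ((continuous_const.mul hIc).intervalIntegrable a b) (hgc.intervalIntegrable a b)
      intro x hx
      exact hgI x (hx.2.trans hbM)
    have hk := key a b
    have h0 : c * I b ≤ 0 := by
      have := mul_nonneg (neg_nonneg.mpr hc0) (hpos b).1.le
      linarith
    have h1 : 0 ≤ d₂ * ∫ x in (a - 1)..a, I x :=
      mul_nonneg hd₂.le (hintnonneg (a - 1) a (by linarith))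
    linarith
  -- smallness of I and its unit integrals near -∞
  have hsmall : ∀ ε : ℝ, 0 < ε → ∃ A : ℝ, ∀ a ≤ A,
      I a ≤ ε ∧ (∫ x in a..(a + 1), I x) ≤ ε := by
    intro ε hε
    obtain ⟨A₀, hA₀⟩ := eventually_atBot.mp (hIbot.eventually (eventually_lt_nhds hε))
    refine ⟨A₀ - 1, fun a ha => ⟨(hA₀ a (by linarith)).le, ?_⟩⟩
    have hmono : (∫ x in a..(a + 1), I x) ≤ ∫ _x in a..(a + 1), ε := by
      apply intervalIntegral.integral_mono_on (by linarith) (hInt a (a + 1))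
        intervalIntegrable_const
      intro x hx
      exact (hA₀ x (by linarith [hx.2])).le
    have : (∫ _x in a..(a + 1), ε) = ε := by
      simp
    linarith
  have hD0 : Tendsto (fun a => ∫ x in a..(a + 1), I x) atBot (nhds (0 : ℝ)) := by
    rw [tendsto_order]
    constructor
    · intro x hx
      filter_upwards [eventually_le_atBot (0 : ℝ)] with a _
      exact lt_of_lt_of_le hx (hintnonneg a (a + 1) (by linarith))
    · intro x hx
      obtain ⟨A, hA⟩ := hsmall (x / 2) (by linarith)
      filter_upwards [eventually_le_atBot A] with a ha
      have := (hA a ha).2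
      linarith
  -- integrability of I on (-∞, M]
  have hIicM : IntegrableOn I (Iic M) := by
    obtain ⟨A, hA⟩ := hsmall 1 one_pos
    apply integrableOn_Iic_of_intervalIntegral_norm_bounded
      ((d₂ * D (M - 1) + d₂ + (-c)) / μ) M
      (fun i : ℝ => hIc.integrableOn_Ioc) (tendsto_id (x := atBot))
    filter_upwards [eventually_le_atBot (min A M)] with a ha
    have haA : a ≤ A := le_trans ha (min_le_left _ _)
    have haM : a ≤ M := le_trans ha (min_le_right _ _)
    have hnorm : (∫ x in a..M, ‖I x‖) = ∫ x in a..M, I x := by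
      apply intervalIntegral.integral_congr
      intro x _
      exact Real.norm_of_nonneg (hpos x).1.le
    simp only [id_eq]
    rw [hnorm]
    have hb := hB a M haM le_rfl
    have h1 : d₂ * (∫ x in a..(a + 1), I x) ≤ d₂ * 1 :=
      mul_le_mul_of_nonneg_left (hA a haA).2 hd₂.le
    have h2 : (-c) * I a ≤ (-c) * 1 :=
      mul_le_mul_of_nonneg_left (hA a haA).1 (neg_nonneg.mpr hc0)
    have h3 : 0 ≤ d₂ * D M := mul_nonneg hd₂.le (hDpos M).le
    rw [le_div_iff₀ hμpos]
    linarith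
  -- the improper integral
  set V : ℝ → ℝ := fun b => ∫ x in Iic b, I x with hVdef
  have hIicb : ∀ b : ℝ, b ≤ M → IntegrableOn I (Iic b) := fun b hb =>
    hIicM.mono_set (Iic_subset_Iic.mpr hb)
  have hVtend : ∀ b : ℝ, b ≤ M →
      Tendsto (fun a => ∫ x in a..b, I x) atBot (nhds (V b)) := fun b hb =>
    intervalIntegral_tendsto_integral_Iic b (hIicb b hb) tendsto_id
  have hVnonneg : ∀ b : ℝ, 0 ≤ V b := fun b =>
    setIntegral_nonneg measurableSet_Iic fun x _ => (hpos x).1.le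
  have hVmono : ∀ p q : ℝ, p ≤ q → q ≤ M → V p ≤ V q := by
    intro p q hpq hqM
    apply setIntegral_mono_set (hIicb q hqM)
      (Eventually.of_forall fun x => (hpos x).1.le)
    exact (Iic_subset_Iic.mpr hpq).eventuallyLE
  -- limit inequality
  have hstar : ∀ b : ℝ, b ≤ M → d₂ * D b + μ * V b ≤ d₂ * D (b - 1) := by
    intro b hb
    have hL : Tendsto (fun a => d₂ * D b + μ * (∫ x in a..b, I x)) atBot
        (nhds (d₂ * D b + μ * V b)) :=
      tendsto_const_nhds.add ((hVtend b hb).const_mul μ)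
    have hR : Tendsto
        (fun a => d₂ * D (b - 1) + d₂ * (∫ x in a..(a + 1), I x) + (-c) * I a) atBot
        (nhds (d₂ * D (b - 1) + d₂ * 0 + (-c) * 0)) :=
      (tendsto_const_nhds.add (hD0.const_mul d₂)).add (hIbot.const_mul (-c))
    have hR' : Tendsto
        (fun a => d₂ * D (b - 1) + d₂ * (∫ x in a..(a + 1), I x) + (-c) * I a) atBot
        (nhds (d₂ * D (b - 1))) := by
      simpa using hR
    refine le_of_tendsto_of_tendsto hL hR' ?_
    filter_upwards [eventually_le_atBot b] with a ha
    exact hB a b ha hb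
  have hDmono : ∀ b : ℝ, b ≤ M → D b ≤ D (b - 1) := by
    intro b hb
    have h := hstar b hb
    have h2 : 0 ≤ μ * V b := mul_nonneg hμpos.le (hVnonneg b)
    have h3 : d₂ * D b ≤ d₂ * D (b - 1) := by linarith
    exact le_of_mul_le_mul_left h3 hd₂
  have hDleV : ∀ x : ℝ, x + 1 ≤ M → D x ≤ V (x + 1) := by
    intro x hx
    have he : D x = ∫ s in Ioc x (x + 1), I s := by
      simp only [hDdef]
      exact intervalIntegral.integral_of_le (by linarith)
    rw [he]
    apply setIntegral_mono_set (hIicb (x + 1) hx)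
      (Eventually.of_forall fun s => (hpos s).1.le)
    exact Ioc_subset_Iic_self.eventuallyLE
  -- induction
  have hind : ∀ n : ℕ, μ * n * V (M - n) ≤ d₂ * D (M - n) := by
    intro n
    induction n with
    | zero =>
      simp only [Nat.cast_zero, mul_zero, zero_mul, sub_zero]
      exact (mul_pos hd₂ (hDpos M)).le
    | succ n ih =>
      have hMn : (M - (n : ℝ)) ≤ M := by
        have : (0 : ℝ) ≤ (n : ℝ) := Nat.cast_nonneg n
        linarith
      have hs := hstar (M - (n : ℝ)) hMn
      have harg : (M - ((n : ℕ) + 1 : ℕ) : ℝ) = (M - (n : ℝ)) - 1 := by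
        push_cast; ring
      rw [harg]
      have hV1 : V ((M - (n : ℝ)) - 1) ≤ V (M - (n : ℝ)) :=
        hVmono _ _ (by linarith) hMn
      have step1 : μ * ((n : ℝ) + 1) * V ((M - (n : ℝ)) - 1) ≤
          μ * ((n : ℝ) + 1) * V (M - (n : ℝ)) := by
        apply mul_le_mul_of_nonneg_left hV1
        positivity
      have step2 : μ * ((n : ℝ) + 1) * V (M - (n : ℝ)) =
          μ * (n : ℝ) * V (M - (n : ℝ)) + μ * V (M - (n : ℝ)) := by ring
      push_cast
      linarith
  -- contradiction
  obtain ⟨n, hn⟩ := exists_nat_gt (d₂ / μ)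
  have hn' : d₂ < μ * n := by
    rw [div_lt_iff₀ hμpos] at hn
    linarith
  have hMn : (M - (n : ℝ)) ≤ M := by
    have : (0 : ℝ) ≤ (n : ℝ) := Nat.cast_nonneg n
    linarith
  have e1 := hind n
  have e2 : D ((M - (n : ℝ)) - 1) ≤ V (M - (n : ℝ)) := by
    have := hDleV ((M - (n : ℝ)) - 1) (by linarith)
    rwa [sub_add_cancel] at this
  have e3 : D (M - (n : ℝ)) ≤ D ((M - (n : ℝ)) - 1) := hDmono _ hMn
  have e4 : μ * (n : ℝ) * D (M - (n : ℝ)) ≤ μ * (n : ℝ) * V (M - (n : ℝ)) := by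
    apply mul_le_mul_of_nonneg_left (le_trans e3 e2)
    positivity
  have e5 : μ * (n : ℝ) * D (M - (n : ℝ)) ≤ d₂ * D (M - (n : ℝ)) := le_trans e4 e1
  nlinarith [hDpos (M - (n : ℝ)), hn', e5]
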